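/- Let H be an induced subgraph of a weighted oriented graph D, with I(H) and I(D) their edge ideals in the polynomial ring R = K[x_v : v ∈ V(D)]. Then for every multidegree a ∈ ℕ^{V(D)} with supp(a) ⊆ V(H), and all i ≥ 0, β_{i,a}(I(H)) = β_{i,a}(I(D)). -/

import Mathlib

open MvPolynomial

/-- A (multigraded) minimal free resolution of an ideal `I ⊆ K[x_v : v ∈ σ]`,
recorded through the ranks `rk i` of its free modules, the multidegrees
`deg i j` of their basis elements, the augmentation `aug : F₀ → R` (whose image
is `I`) and the differentials `d i : F_{i+1} → F_i`, given by matrices. -/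
structure MinFreeRes {K : Type} [Field K] {σ : Type} (I : Ideal (MvPolynomial σ K)) where
  rk : ℕ → ℕ
  deg : (i : ℕ) → Fin (rk i) → (σ →₀ ℕ)
  aug : (Fin (rk 0) → MvPolynomial σ K) →ₗ[MvPolynomial σ K] MvPolynomial σ K
  d : (i : ℕ) → Matrix (Fin (rk i)) (Fin (rk (i + 1))) (MvPolynomial σ K)
  aug_homog : ∀ j, (aug (Pi.single j 1)).support ⊆ {deg 0 j}
  d_homog : ∀ i j k, ∀ m ∈ (d i j k).support, deg i j + m = deg (i + 1) k
  minimal : ∀ i j k, MvPolynomial.coeff (0 : σ →₀ ℕ) (d i j k) = 0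
  range_aug : ∀ p, p ∈ LinearMap.range aug ↔ p ∈ I
  exact_zero : LinearMap.range (Matrix.mulVecLin (d 0)) = LinearMap.ker aug
  exact_succ : ∀ i,
    LinearMap.range (Matrix.mulVecLin (d (i + 1))) = LinearMap.ker (Matrix.mulVecLin (d i))

/-- The multigraded Betti number `β_{i,a}(I)`: the number of basis elements of the
`i`-th free module in the minimal free resolution with multidegree `a`. -/
noncomputable def MinFreeRes.cnt {K : Type} [Field K] {σ : Type}
    {I : Ideal (MvPolynomial σ K)} (F : MinFreeRes I) (i : ℕ) (a : σ →₀ ℕ) : ℕ :=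
  Nat.card {j : Fin (F.rk i) // F.deg i j = a}

/-- `F` witnesses that `pdim I = p`. -/
def MinFreeRes.IsPdim {K : Type} [Field K] {σ : Type}
    {I : Ideal (MvPolynomial σ K)} (F : MinFreeRes I) (p : ℕ) : Prop :=
  F.rk p ≠ 0 ∧ ∀ i, p < i → F.rk i = 0

/-- `F` witnesses that `reg I = r`, i.e. `r = max { |a| - i : β_{i,a}(I) ≠ 0 }`. -/
def MinFreeRes.IsReg {K : Type} [Field K] {σ : Type}
    {I : Ideal (MvPolynomial σ K)} (F : MinFreeRes I) (r : ℤ) : Prop :=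
  (∃ i j, ((F.deg i j).sum fun _ e => e : ℤ) - i = r) ∧
    ∀ i j, ((F.deg i j).sum fun _ e => e : ℤ) - i ≤ r

/-- `I` is a monomial ideal. -/
def IsMonomialIdeal {K : Type} [Field K] {σ : Type} (I : Ideal (MvPolynomial σ K)) : Prop :=
  ∃ S : Set (σ →₀ ℕ), I = Ideal.span ((fun a => monomial a (1 : K)) '' S)


open Matrix

namespace S19Aux

variable {K : Type} [Field K] {V : Type}

/-- `p` is multigraded-homogeneous: every monomial `m` of `p` satisfies `e + m = c`. -/
def Homog (e c : V →₀ ℕ) (p : MvPolynomial V K) : Prop := ∀ m ∈ p.support, e + m = c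

lemma homog_zero {e c : V →₀ ℕ} : Homog e c (0 : MvPolynomial V K) := by
  intro m hm; simp at hm

lemma Homog.add {e c : V →₀ ℕ} {p q : MvPolynomial V K} (hp : Homog e c p) (hq : Homog e c q) :
    Homog e c (p + q) := by
  classical
  intro m hm
  rcases Finset.mem_union.mp (MvPolynomial.support_add hm) with h | h
  · exact hp m h
  · exact hq m h

lemma Homog.sub {e c : V →₀ ℕ} {p q : MvPolynomial V K} (hp : Homog e c p) (hq : Homog e c q) :
    Homog e c (p - q) := by
  classical
  intro m hm
  rcases Finset.mem_union.mp (MvPolynomial.support_sub _ p q hm) with h | h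
  · exact hp m h
  · exact hq m h

lemma homog_sum {ι : Type*} {e c : V →₀ ℕ} {s : Finset ι} {f : ι → MvPolynomial V K}
    (h : ∀ i ∈ s, Homog e c (f i)) : Homog e c (∑ i ∈ s, f i) :=
  Finset.sum_induction f (Homog e c) (fun _ _ => Homog.add) homog_zero h

lemma Homog.mul {e₁ e₂ e₃ : V →₀ ℕ} {p q : MvPolynomial V K} (hp : Homog e₁ e₂ p) (hq : Homog e₂ e₃ q) :
    Homog e₁ e₃ (p * q) := by
  classical
  intro m hm
  have h := MvPolynomial.support_mul p q hm
  rw [Finset.mem_add] at h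
  obtain ⟨m₁, hm₁, m₂, hm₂, rfl⟩ := h
  rw [← add_assoc, hp m₁ hm₁, hq m₂ hm₂]

lemma finsupp_add_left_cancel {e m m' : V →₀ ℕ} (h : e + m = e + m') : m = m' := by
  ext v
  have := DFunLike.congr_fun h v
  simp only [Finsupp.add_apply] at this
  omega

open scoped Classical in
/-- The multidegree `c - e` component of `p`. -/
noncomputable def hcp (e c : V →₀ ℕ) (p : MvPolynomial V K) : MvPolynomial V K :=
  if e ≤ c then monomial (c - e) (coeff (c - e) p) else 0

lemma hcp_zero {e c : V →₀ ℕ} : hcp e c (0 : MvPolynomial V K) = 0 := by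
  unfold hcp; split_ifs <;> simp

lemma hcp_add {e c : V →₀ ℕ} (p q : MvPolynomial V K) : hcp e c (p + q) = hcp e c p + hcp e c q := by
  unfold hcp; split_ifs <;> simp

lemma hcp_sum {ι : Type*} {e c : V →₀ ℕ} (s : Finset ι) (f : ι → MvPolynomial V K) :
    hcp e c (∑ i ∈ s, f i) = ∑ i ∈ s, hcp e c (f i) := by
  classical
  induction s using Finset.induction_on with
  | empty => simp [hcp_zero]
  | insert _ _ h ih => rw [Finset.sum_insert h, Finset.sum_insert h, hcp_add, ih]

lemma homog_support_singleton {e c m₀ : V →₀ ℕ} {p : MvPolynomial V K} (h : Homog e c p)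
    (hm₀ : m₀ ∈ p.support) : p = monomial m₀ (coeff m₀ p) := by
  classical
  have hkey : ∀ m ∈ p.support, m = m₀ := fun m hm =>
    finsupp_add_left_cancel ((h m hm).trans (h m₀ hm₀).symm)
  ext b
  rw [coeff_monomial]
  split_ifs with hb
  · rw [hb]
  · by_contra hc
    exact hb ((hkey b (by rwa [mem_support_iff])).symm)

lemma Homog.hcp_eq {e c : V →₀ ℕ} {p : MvPolynomial V K} (h : Homog e c p) : hcp e c p = p := by
  classical
  by_cases hp : p = 0
  · rw [hp, hcp_zero]
  · obtain ⟨m₀, hm₀⟩ := Finset.nonempty_iff_ne_empty.mpr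
      (fun he => hp (MvPolynomial.support_eq_empty.mp he))
    have he : e + m₀ = c := h m₀ hm₀
    have hle : e ≤ c := le_iff_exists_add.mpr ⟨m₀, he.symm⟩
    have hsub : c - e = m₀ := by
      ext v
      have := DFunLike.congr_fun he v
      simp only [Finsupp.add_apply] at this
      simp only [Finsupp.tsub_apply]
      omega
    rw [hcp, if_pos hle, hsub]
    exact (homog_support_singleton h hm₀).symm

lemma homog_hcp {e c : V →₀ ℕ} (p : MvPolynomial V K) : Homog e c (hcp e c p) := by
  classical
  unfold hcp
  split_ifs with h
  · intro m hm
    have hm' : m = c - e := by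
      have := MvPolynomial.support_monomial_subset hm
      simpa using this
    rw [hm']
    ext v
    have := Finsupp.le_def.mp h v
    simp only [Finsupp.add_apply, Finsupp.tsub_apply]
    omega
  · exact homog_zero

lemma hcp_mul_monomial {e₁ e₂ c m₀ : V →₀ ℕ} (he : e₁ + m₀ = e₂) (α : K) (q : MvPolynomial V K) :
    hcp e₁ c (monomial m₀ α * q) = monomial m₀ α * hcp e₂ c q := by
  classical
  unfold hcp
  by_cases h2 : e₂ ≤ c
  · have h1 : e₁ ≤ c := le_trans (le_iff_exists_add.mpr ⟨m₀, he.symm⟩) h2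
    rw [if_pos h1, if_pos h2]
    have key : c - e₁ = m₀ + (c - e₂) := by
      ext v
      have h2v := Finsupp.le_def.mp h2 v
      have hev := DFunLike.congr_fun he v
      simp only [Finsupp.add_apply] at hev ⊢
      simp only [Finsupp.tsub_apply]
      omega
    rw [key, coeff_monomial_mul, monomial_mul]
  · rw [if_neg h2, mul_zero]
    by_cases h1 : e₁ ≤ c
    · rw [if_pos h1]
      have hnle : ¬ m₀ ≤ c - e₁ := by
        intro hle
        apply h2
        intro v
        have := Finsupp.le_def.mp hle v
        have h1v := Finsupp.le_def.mp h1 v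
        have hev := DFunLike.congr_fun he v
        simp only [Finsupp.add_apply] at hev
        simp only [Finsupp.tsub_apply] at this
        omega
      rw [coeff_monomial_mul', if_neg hnle, map_zero]
    · rw [if_neg h1]

lemma hcp_mul {e₁ e₂ c : V →₀ ℕ} {p : MvPolynomial V K} (h : Homog e₁ e₂ p) (q : MvPolynomial V K) :
    hcp e₁ c (p * q) = p * hcp e₂ c q := by
  by_cases hp : p = 0
  · rw [hp, zero_mul, zero_mul, hcp_zero]
  · obtain ⟨m₀, hm₀⟩ := Finset.nonempty_iff_ne_empty.mpr
      (fun he => hp (MvPolynomial.support_eq_empty.mp he))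
    have he : e₁ + m₀ = e₂ := h m₀ hm₀
    have hmono := homog_support_singleton h hm₀
    rw [hmono] at *
    exact hcp_mul_monomial he _ q

-- vector / matrix layer

lemma vec_eq_sum {n : ℕ} (x : Fin n → MvPolynomial V K) : x = ∑ k, x k • (Pi.single k (1 : MvPolynomial V K) : Fin n → MvPolynomial V K) := by
  funext j
  rw [Finset.sum_apply]
  simp [Pi.single_apply]

lemma mulVec_apply' {m n : ℕ} (M : Matrix (Fin m) (Fin n) (MvPolynomial V K)) (x : Fin n → MvPolynomial V K) (l : Fin m) :
    (M *ᵥ x) l = ∑ k, M l k * x k := rfl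

lemma mulVec_cols {m n : ℕ} (M : Matrix (Fin m) (Fin n) (MvPolynomial V K)) (x : Fin n → MvPolynomial V K) :
    M *ᵥ x = ∑ k, x k • (fun l => M l k) := by
  funext l
  rw [mulVec_apply', Finset.sum_apply]
  exact Finset.sum_congr rfl fun k _ => by simp [mul_comm]

lemma mulVec_homog {m n : ℕ} {dA : Fin m → V →₀ ℕ} {dB : Fin n → V →₀ ℕ} {c : V →₀ ℕ}
    {M : Matrix (Fin m) (Fin n) (MvPolynomial V K)} (hM : ∀ l k, Homog (dA l) (dB k) (M l k))
    {v : Fin n → MvPolynomial V K} (hv : ∀ k, Homog (dB k) c (v k)) :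
    ∀ l, Homog (dA l) c ((M *ᵥ v) l) := by
  intro l
  rw [mulVec_apply']
  exact homog_sum fun k _ => (hM l k).mul (hv k)

lemma lift_matrix {m n : ℕ} {dA : Fin m → V →₀ ℕ} {dB : Fin n → V →₀ ℕ}
    {M : Matrix (Fin m) (Fin n) (MvPolynomial V K)} (hM : ∀ l k, Homog (dA l) (dB k) (M l k))
    {c : V →₀ ℕ} {v : Fin m → MvPolynomial V K} (hv : ∀ l, Homog (dA l) c (v l))
    (hmem : v ∈ LinearMap.range (Matrix.mulVecLin M)) :
    ∃ u : Fin n → MvPolynomial V K, (∀ k, Homog (dB k) c (u k)) ∧ M *ᵥ u = v := by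
  obtain ⟨w, hw⟩ := hmem
  rw [Matrix.mulVecLin_apply] at hw
  refine ⟨fun k => hcp (dB k) c (w k), fun k => homog_hcp _, ?_⟩
  funext l
  calc (M *ᵥ fun k => hcp (dB k) c (w k)) l = ∑ k, M l k * hcp (dB k) c (w k) :=
        mulVec_apply' _ _ _
    _ = ∑ k, hcp (dA l) c (M l k * w k) :=
        Finset.sum_congr rfl fun k _ => (hcp_mul (hM l k) (w k)).symm
    _ = hcp (dA l) c (∑ k, M l k * w k) := (hcp_sum _ _).symm
    _ = hcp (dA l) c ((M *ᵥ w) l) := by rw [mulVec_apply']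
    _ = v l := by rw [hw]; exact (hv l).hcp_eq

lemma aug_expand {n : ℕ} (L : (Fin n → MvPolynomial V K) →ₗ[MvPolynomial V K] MvPolynomial V K) (y : Fin n → MvPolynomial V K) :
    L y = ∑ k, y k * L (Pi.single k 1) := by
  conv_lhs => rw [vec_eq_sum y]
  rw [map_sum]
  exact Finset.sum_congr rfl fun k _ => by rw [_root_.map_smul, smul_eq_mul]

lemma lift_aug {n : ℕ} {degs : Fin n → V →₀ ℕ} (L : (Fin n → MvPolynomial V K) →ₗ[MvPolynomial V K] MvPolynomial V K)
    (hg : ∀ k, Homog 0 (degs k) (L (Pi.single k 1))) {c : V →₀ ℕ} {p : MvPolynomial V K}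
    (hp : Homog 0 c p) (hmem : p ∈ LinearMap.range L) :
    ∃ u : Fin n → MvPolynomial V K, (∀ k, Homog (degs k) c (u k)) ∧ L u = p := by
  obtain ⟨w, hw⟩ := hmem
  refine ⟨fun k => hcp (degs k) c (w k), fun k => homog_hcp _, ?_⟩
  rw [aug_expand]
  calc ∑ k, hcp (degs k) c (w k) * L (Pi.single k 1)
      = ∑ k, hcp 0 c (L (Pi.single k 1) * w k) := by
        refine Finset.sum_congr rfl fun k _ => ?_
        rw [hcp_mul (by simpa using hg k) (w k), mul_comm]
    _ = hcp 0 c (∑ k, L (Pi.single k 1) * w k) := (hcp_sum _ _).symm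
    _ = hcp 0 c (L w) := by
        rw [aug_expand L w]
        congr 1
        exact Finset.sum_congr rfl fun k _ => mul_comm _ _
    _ = p := by rw [hw]; exact hp.hcp_eq

lemma mulVec_sumv {m n : ℕ} (M : Matrix (Fin m) (Fin n) (MvPolynomial V K)) {ι : Type}
    (s : Finset ι) (f : ι → Fin n → MvPolynomial V K) :
    M *ᵥ (∑ i ∈ s, f i) = ∑ i ∈ s, M *ᵥ (f i) := by
  classical
  induction s using Finset.induction_on with
  | empty => simp
  | insert _ _ hnotmem ih =>
    rw [Finset.sum_insert hnotmem, Finset.sum_insert hnotmem, Matrix.mulVec_add, ih]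

section Res
variable {I J : Ideal (MvPolynomial V K)}

/-- kernel of the `i`-th "previous" map of the resolution. -/
noncomputable def gker (F : MinFreeRes I) : (i : ℕ) → Submodule (MvPolynomial V K) (Fin (F.rk i) → MvPolynomial V K)
  | 0 => LinearMap.ker F.aug
  | (i+1) => LinearMap.ker (Matrix.mulVecLin (F.d i))

lemma range_d_eq (F : MinFreeRes I) (i : ℕ) :
    LinearMap.range (Matrix.mulVecLin (F.d i)) = gker F i := by
  cases i with
  | zero => exact F.exact_zero
  | succ i => exact F.exact_succ i

lemma dcol_mem_gker (F : MinFreeRes I) (i : ℕ) (j : Fin (F.rk (i+1))) :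
    (fun k => F.d i k j) ∈ gker F i := by
  rw [← range_d_eq]
  refine ⟨Pi.single j 1, ?_⟩
  rw [Matrix.mulVecLin_apply, Matrix.mulVec_single]
  funext l; simp

lemma d_homog' (F : MinFreeRes I) (i : ℕ) :
    ∀ k j, Homog (F.deg i k) (F.deg (i+1) j) (F.d i k j) := fun k j => F.d_homog i k j

lemma aug_homog' (F : MinFreeRes I) (j : Fin (F.rk 0)) :
    Homog 0 (F.deg 0 j) (F.aug (Pi.single j 1)) := by
  intro m hm
  have := F.aug_homog j hm
  simp only [Finset.mem_singleton] at this
  rw [this, zero_add]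

lemma homog_col_supp {m : ℕ} {dA : Fin m → V →₀ ℕ} {c : V →₀ ℕ} {u : Fin m → MvPolynomial V K}
    (hu : ∀ l, Homog (dA l) c (u l)) (a : V →₀ ℕ) (hc : c ≤ a) :
    ∀ l, u l ≠ 0 → dA l ≤ a := by
  intro l hl
  obtain ⟨m₀, hm₀⟩ := Finset.nonempty_iff_ne_empty.mpr
    (fun he => hl (MvPolynomial.support_eq_empty.mp he))
  exact le_trans (le_iff_exists_add.mpr ⟨m₀, (hu l m₀ hm₀).symm⟩) hc

variable (F : MinFreeRes I) (G : MinFreeRes J)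
variable (good : ∀ i, Fin (F.rk i) → Prop)
variable (hgood : ∀ i (k : Fin (F.rk i)) (j : Fin (F.rk (i+1))),
    F.d i k j ≠ 0 → good (i+1) j → good i k)
variable (hsolv : ∀ k, good 0 k → F.aug (Pi.single k 1) ∈ LinearMap.range G.aug)

/-- Type of stage-`i` pieces of a partial chain map `F → G` defined on `good` columns. -/
def cmP (i : ℕ) :=
  {M : Matrix (Fin (G.rk i)) (Fin (F.rk i)) (MvPolynomial V K) //
    (∀ l k, Homog (G.deg i l) (F.deg i k) (M l k)) ∧
    ∀ x : Fin (F.rk i) → MvPolynomial V K, (∀ k, x k ≠ 0 → good i k) → x ∈ gker F i →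
      M *ᵥ x ∈ gker G i}

open scoped Classical in
noncomputable def cmBase :
    Σ' (M : cmP F G good 0), ∀ k, good 0 k →
      G.aug (fun l => M.1 l k) = F.aug (Pi.single k 1) := by
  have ex : ∀ k, good 0 k → ∃ u : Fin (G.rk 0) → MvPolynomial V K,
      (∀ l, Homog (G.deg 0 l) (F.deg 0 k) (u l)) ∧ G.aug u = F.aug (Pi.single k 1) := by
    intro k hk
    exact lift_aug G.aug (aug_homog' G) (aug_homog' F k) (hsolv k hk)
  choose u hu₁ hu₂ using ex
  refine ⟨⟨fun l k => if h : good 0 k then u k h l else 0, ?_, ?_⟩, ?_⟩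
  · intro l k
    dsimp only
    by_cases h : good 0 k
    · rw [dif_pos h]; exact hu₁ k h l
    · rw [dif_neg h]; exact homog_zero
  · intro x hx hker
    have hker' : F.aug x = 0 := hker
    show G.aug _ = 0
    rw [mulVec_cols (fun l k => if h : good 0 k then u k h l else 0) x, map_sum]
    have : ∀ k : Fin (F.rk 0), G.aug (x k • fun l => if h : good 0 k then u k h l else 0)
        = x k * F.aug (Pi.single k 1) := by
      intro k
      rw [_root_.map_smul, smul_eq_mul]
      by_cases h : good 0 k
      · have hcolu : (fun l => if h' : good 0 k then u k h' l else 0) = u k h := by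
          funext l; rw [dif_pos h]
        rw [hcolu, hu₂ k h]
      · have hxk : x k = 0 := by
          by_contra hc; exact h (hx k hc)
        rw [hxk, zero_mul, zero_mul]
    rw [Finset.sum_congr rfl fun k _ => this k]
    rw [← aug_expand, hker']
  · intro k hk
    have : (fun l => if h : good 0 k then u k h l else 0) = u k hk := by
      funext l; rw [dif_pos hk]
    rw [this]
    exact hu₂ k hk

open scoped Classical in
noncomputable def cmStep (i : ℕ) (prev : cmP F G good i) :
    Σ' (M : cmP F G good (i+1)), ∀ j, good (i+1) j →
      G.d i *ᵥ (fun l => M.1 l j) = prev.1 *ᵥ (fun k => F.d i k j) := by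
  have ex : ∀ j, good (i+1) j → ∃ u : Fin (G.rk (i+1)) → MvPolynomial V K,
      (∀ l, Homog (G.deg (i+1) l) (F.deg (i+1) j) (u l)) ∧
      G.d i *ᵥ u = prev.1 *ᵥ (fun k => F.d i k j) := by
    intro j hj
    have hsupp : ∀ k, (fun k => F.d i k j) k ≠ 0 → good i k := fun k hk => hgood i k j hk hj
    have hmem : prev.1 *ᵥ (fun k => F.d i k j) ∈ gker G i :=
      prev.2.2 _ hsupp (dcol_mem_gker F i j)
    have hmem' : prev.1 *ᵥ (fun k => F.d i k j)
        ∈ LinearMap.range (Matrix.mulVecLin (G.d i)) := by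
      rw [range_d_eq G i]; exact hmem
    exact lift_matrix (d_homog' G i)
      (mulVec_homog prev.2.1 (fun k => F.d_homog i k j)) hmem'
  choose u hu₁ hu₂ using ex
  refine ⟨⟨fun l j => if h : good (i+1) j then u j h l else 0, ?_, ?_⟩, ?_⟩
  · intro l j
    dsimp only
    by_cases h : good (i+1) j
    · rw [dif_pos h]; exact hu₁ j h l
    · rw [dif_neg h]; exact homog_zero
  · intro x hx hker
    have hker' : F.d i *ᵥ x = 0 := hker
    show Matrix.mulVecLin (G.d i) _ = 0
    rw [Matrix.mulVecLin_apply,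
      mulVec_cols (fun l j => if h : good (i+1) j then u j h l else 0) x, mulVec_sumv]
    have : ∀ j : Fin (F.rk (i+1)),
        G.d i *ᵥ (x j • fun l => if h : good (i+1) j then u j h l else 0)
        = x j • (prev.1 *ᵥ (fun k => F.d i k j)) := by
      intro j
      rw [Matrix.mulVec_smul]
      by_cases h : good (i+1) j
      · have hcolu : (fun l => if h' : good (i+1) j then u j h' l else 0) = u j h := by
          funext l; rw [dif_pos h]
        rw [hcolu, hu₂ j h]
      · have hxj : x j = 0 := by
          by_contra hc; exact h (hx j hc)
        rw [hxj, zero_smul, zero_smul]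
    rw [Finset.sum_congr rfl fun j _ => this j]
    have hcol : ∀ j : Fin (F.rk (i+1)),
        (fun k => F.d i k j) = F.d i *ᵥ (Pi.single j (1 : MvPolynomial V K) : Fin (F.rk (i+1)) → MvPolynomial V K) := by
      intro j; rw [Matrix.mulVec_single]; funext l; simp
    calc ∑ j, x j • (prev.1 *ᵥ (fun k => F.d i k j))
        = ∑ j, prev.1 *ᵥ (F.d i *ᵥ (x j • (Pi.single j (1:MvPolynomial V K) : Fin (F.rk (i+1)) → MvPolynomial V K))) := by
          refine Finset.sum_congr rfl fun j _ => ?_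
          rw [Matrix.mulVec_smul, Matrix.mulVec_smul, ← hcol j]
      _ = prev.1 *ᵥ (F.d i *ᵥ ∑ j, x j • (Pi.single j (1:MvPolynomial V K) : Fin (F.rk (i+1)) → MvPolynomial V K)) := by
          rw [mulVec_sumv, mulVec_sumv]
      _ = 0 := by rw [← vec_eq_sum x, hker']; simp
  · intro j hj
    have : (fun l => if h : good (i+1) j then u j h l else 0) = u j hj := by
      funext l; rw [dif_pos hj]
    rw [this]
    exact hu₂ j hj

noncomputable def cm : ∀ i, cmP F G good i
  | 0 => (cmBase F G good hsolv).1
  | (i+1) => (cmStep F G good hgood i (cm i)).1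

lemma cm_aug : ∀ k, good 0 k →
    G.aug (fun l => (cm F G good hgood hsolv 0).1 l k) = F.aug (Pi.single k 1) :=
  (cmBase F G good hsolv).2

lemma cm_chain (i : ℕ) : ∀ j, good (i+1) j →
    G.d i *ᵥ (fun l => (cm F G good hgood hsolv (i+1)).1 l j)
      = (cm F G good hgood hsolv i).1 *ᵥ (fun k => F.d i k j) :=
  (cmStep F G good hgood i (cm F G good hgood hsolv i)).2

lemma cm_chain_vec (i : ℕ) (y : Fin (F.rk (i+1)) → MvPolynomial V K)
    (hy : ∀ j, y j ≠ 0 → good (i+1) j) :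
    G.d i *ᵥ ((cm F G good hgood hsolv (i+1)).1 *ᵥ y)
      = (cm F G good hgood hsolv i).1 *ᵥ (F.d i *ᵥ y) := by
  conv_rhs => rw [vec_eq_sum y]
  rw [mulVec_cols ((cm F G good hgood hsolv (i+1)).1) y, mulVec_sumv, mulVec_sumv, mulVec_sumv]
  refine Finset.sum_congr rfl fun j _ => ?_
  by_cases h : good (i+1) j
  · rw [Matrix.mulVec_smul, Matrix.mulVec_smul, Matrix.mulVec_smul, Matrix.mulVec_single]
    have hone : (MulOpposite.op (1 : MvPolynomial V K) • (F.d i).col j) = fun k => F.d i k j := by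
      funext k; simp
    rw [hone, cm_chain F G good hgood hsolv i j h]
  · have hyj : y j = 0 := by by_contra hc; exact h (hy j hc)
    simp [hyj]

lemma cm_aug_vec (y : Fin (F.rk 0) → MvPolynomial V K)
    (hy : ∀ k, y k ≠ 0 → good 0 k) :
    G.aug ((cm F G good hgood hsolv 0).1 *ᵥ y) = F.aug y := by
  rw [mulVec_cols ((cm F G good hgood hsolv 0).1) y, map_sum]
  conv_rhs => rw [vec_eq_sum y]
  rw [map_sum]
  refine Finset.sum_congr rfl fun k _ => ?_
  rw [_root_.map_smul, _root_.map_smul]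
  by_cases h : good 0 k
  · rw [cm_aug F G good hgood hsolv k h]
  · have hyk : y k = 0 := by by_contra hc; exact h (hy k hc)
    simp [hyk]

end Res

section Homotopy
variable {I : Ideal (MvPolynomial V K)}
variable (F : MinFreeRes I)
variable (good : ∀ i, Fin (F.rk i) → Prop)
variable (hgood : ∀ i (k : Fin (F.rk i)) (j : Fin (F.rk (i+1))),
    F.d i k j ≠ 0 → good (i+1) j → good i k)
variable (α β : ∀ i, Matrix (Fin (F.rk i)) (Fin (F.rk i)) (MvPolynomial V K))
variable (hαh : ∀ (i : ℕ) (l k : Fin (F.rk i)), Homog (F.deg i l) (F.deg i k) (α i l k))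
variable (hβh : ∀ (i : ℕ) (l k : Fin (F.rk i)), Homog (F.deg i l) (F.deg i k) (β i l k))
variable (hαc : ∀ i j, good (i+1) j →
    F.d i *ᵥ (fun l => α (i+1) l j) = α i *ᵥ (fun k => F.d i k j))
variable (hβc : ∀ i j, good (i+1) j →
    F.d i *ᵥ (fun l => β (i+1) l j) = β i *ᵥ (fun k => F.d i k j))
variable (haug : ∀ k, good 0 k →
    F.aug (fun l => α 0 l k) = F.aug (fun l => β 0 l k))


/-- Stage-`i` homotopy data. -/
def htP (i : ℕ) :=
  {h : Matrix (Fin (F.rk (i+1))) (Fin (F.rk i)) (MvPolynomial V K) //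
    (∀ l k, Homog (F.deg (i+1) l) (F.deg i k) (h l k)) ∧
    ∀ x : Fin (F.rk i) → MvPolynomial V K, (∀ k, x k ≠ 0 → good i k) → x ∈ gker F i →
      F.d i *ᵥ (h *ᵥ x) = (α i - β i) *ᵥ x}

open scoped Classical in
noncomputable def htBase :
    Σ' (h : htP F good α β 0), ∀ k, good 0 k →
      F.d 0 *ᵥ (fun l => h.1 l k) = (fun l => (α 0 - β 0) l k) := by
  have ex : ∀ k, good 0 k → ∃ u : Fin (F.rk 1) → MvPolynomial V K,
      (∀ l, Homog (F.deg 1 l) (F.deg 0 k) (u l)) ∧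
      F.d 0 *ᵥ u = (fun l => (α 0 - β 0) l k) := by
    intro k hk
    have hv : ∀ l, Homog (F.deg 0 l) (F.deg 0 k) ((α 0 - β 0) l k) := by
      intro l
      rw [Matrix.sub_apply]
      exact (hαh 0 l k).sub (hβh 0 l k)
    have hmem : (fun l => (α 0 - β 0) l k) ∈ LinearMap.range (Matrix.mulVecLin (F.d 0)) := by
      rw [range_d_eq F 0]
      show F.aug _ = 0
      have : (fun l => (α 0 - β 0) l k) = (fun l => α 0 l k) - (fun l => β 0 l k) := by
        funext l; simp [Matrix.sub_apply]
      rw [this, map_sub, haug k hk, sub_self]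
    exact lift_matrix (d_homog' F 0) hv hmem
  choose u hu₁ hu₂ using ex
  refine ⟨⟨fun l k => if h : good 0 k then u k h l else 0, ?_, ?_⟩, ?_⟩
  · intro l k
    dsimp only
    by_cases h : good 0 k
    · rw [dif_pos h]; exact hu₁ k h l
    · rw [dif_neg h]; exact homog_zero
  · intro x hx _
    rw [mulVec_cols (fun l k => if h : good 0 k then u k h l else 0) x, mulVec_sumv]
    have : ∀ k : Fin (F.rk 0),
        F.d 0 *ᵥ (x k • fun l => if h : good 0 k then u k h l else 0)
        = x k • (fun l => (α 0 - β 0) l k) := by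
      intro k
      rw [Matrix.mulVec_smul]
      by_cases h : good 0 k
      · have hcolu : (fun l => if h' : good 0 k then u k h' l else 0) = u k h := by
          funext l; rw [dif_pos h]
        rw [hcolu, hu₂ k h]
      · have hxk : x k = 0 := by by_contra hc; exact h (hx k hc)
        rw [hxk, zero_smul, zero_smul]
    rw [Finset.sum_congr rfl fun k _ => this k, ← mulVec_cols]
  · intro k hk
    have : (fun l => if h : good 0 k then u k h l else 0) = u k hk := by
      funext l; rw [dif_pos hk]
    rw [this]
    exact hu₂ k hk

open scoped Classical in
noncomputable def htStep (i : ℕ) (prev : htP F good α β i) :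
    Σ' (h : htP F good α β (i+1)), ∀ j, good (i+1) j →
      F.d (i+1) *ᵥ (fun l => h.1 l j)
        = (fun l => (α (i+1) - β (i+1)) l j) - prev.1 *ᵥ (fun k => F.d i k j) := by
  have ex : ∀ j, good (i+1) j → ∃ u : Fin (F.rk (i+2)) → MvPolynomial V K,
      (∀ l, Homog (F.deg (i+2) l) (F.deg (i+1) j) (u l)) ∧
      F.d (i+1) *ᵥ u
        = (fun l => (α (i+1) - β (i+1)) l j) - prev.1 *ᵥ (fun k => F.d i k j) := by
    intro j hj
    set δ : Fin (F.rk (i+1)) → MvPolynomial V K :=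
      (fun l => (α (i+1) - β (i+1)) l j) - prev.1 *ᵥ (fun k => F.d i k j) with hδ
    have hδh : ∀ l, Homog (F.deg (i+1) l) (F.deg (i+1) j) (δ l) := by
      intro l
      have hδl : δ l = (α (i+1) l j - β (i+1) l j)
          - (prev.1 *ᵥ (fun k => F.d i k j)) l := by
        simp only [hδ, Pi.sub_apply, Matrix.sub_apply]
      rw [hδl]
      exact ((hαh (i+1) l j).sub (hβh (i+1) l j)).sub
        (mulVec_homog prev.2.1 (fun k => F.d_homog i k j) l)
    have hsupp : ∀ k, (fun k => F.d i k j) k ≠ 0 → good i k := fun k hk => hgood i k j hk hj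
    have hprev := prev.2.2 (fun k => F.d i k j) hsupp (dcol_mem_gker F i j)
    have hmem : δ ∈ LinearMap.range (Matrix.mulVecLin (F.d (i+1))) := by
      rw [range_d_eq F (i+1)]
      show Matrix.mulVecLin (F.d i) δ = 0
      rw [Matrix.mulVecLin_apply, hδ, Matrix.mulVec_sub, hprev]
      have hab : (fun l => (α (i+1) - β (i+1)) l j)
          = (fun l => α (i+1) l j) - (fun l => β (i+1) l j) := by
        funext l; simp [Matrix.sub_apply]
      rw [hab, Matrix.mulVec_sub, hαc i j hj, hβc i j hj, Matrix.sub_mulVec, sub_self]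
    exact lift_matrix (d_homog' F (i+1)) hδh hmem
  choose u hu₁ hu₂ using ex
  refine ⟨⟨fun l j => if h : good (i+1) j then u j h l else 0, ?_, ?_⟩, ?_⟩
  · intro l j
    dsimp only
    by_cases h : good (i+1) j
    · rw [dif_pos h]; exact hu₁ j h l
    · rw [dif_neg h]; exact homog_zero
  · intro x hx hker
    have hker' : F.d i *ᵥ x = 0 := hker
    rw [mulVec_cols (fun l j => if h : good (i+1) j then u j h l else 0) x, mulVec_sumv]
    have : ∀ j : Fin (F.rk (i+1)),
        F.d (i+1) *ᵥ (x j • fun l => if h : good (i+1) j then u j h l else 0)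
        = x j • ((fun l => (α (i+1) - β (i+1)) l j) - prev.1 *ᵥ (fun k => F.d i k j)) := by
      intro j
      rw [Matrix.mulVec_smul]
      by_cases h : good (i+1) j
      · have hcolu : (fun l => if h' : good (i+1) j then u j h' l else 0) = u j h := by
          funext l; rw [dif_pos h]
        rw [hcolu, hu₂ j h]
      · have hxj : x j = 0 := by by_contra hc; exact h (hx j hc)
        rw [hxj, zero_smul, zero_smul]
    rw [Finset.sum_congr rfl fun j _ => this j]
    have hsplit : ∀ j : Fin (F.rk (i+1)),
        x j • ((fun l => (α (i+1) - β (i+1)) l j) - prev.1 *ᵥ (fun k => F.d i k j))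
        = x j • (fun l => (α (i+1) - β (i+1)) l j)
          - x j • (prev.1 *ᵥ (F.d i *ᵥ (Pi.single j (1:MvPolynomial V K) : Fin (F.rk (i+1)) → MvPolynomial V K))) := by
      intro j
      rw [smul_sub]
      congr 2
      rw [Matrix.mulVec_single]
      funext k; simp; rfl
    rw [Finset.sum_congr rfl fun j _ => hsplit j, Finset.sum_sub_distrib]
    have h1 : ∑ j, x j • (fun l => (α (i+1) - β (i+1)) l j) = (α (i+1) - β (i+1)) *ᵥ x :=
      (mulVec_cols _ x).symm
    have h2 : ∑ j, x j • (prev.1 *ᵥ (F.d i *ᵥ (Pi.single j (1:MvPolynomial V K) : Fin (F.rk (i+1)) → MvPolynomial V K)))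
        = prev.1 *ᵥ (F.d i *ᵥ x) := by
      calc ∑ j, x j • (prev.1 *ᵥ (F.d i *ᵥ (Pi.single j (1:MvPolynomial V K) : Fin (F.rk (i+1)) → MvPolynomial V K)))
          = ∑ j, prev.1 *ᵥ (F.d i *ᵥ (x j • (Pi.single j (1:MvPolynomial V K) : Fin (F.rk (i+1)) → MvPolynomial V K))) := by
            refine Finset.sum_congr rfl fun j _ => ?_
            rw [Matrix.mulVec_smul, Matrix.mulVec_smul]
        _ = prev.1 *ᵥ (F.d i *ᵥ ∑ j, x j • (Pi.single j (1:MvPolynomial V K) : Fin (F.rk (i+1)) → MvPolynomial V K)) := by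
            rw [mulVec_sumv, mulVec_sumv]
        _ = prev.1 *ᵥ (F.d i *ᵥ x) := by rw [← vec_eq_sum x]
    rw [h1, h2, hker']
    simp
  · intro j hj
    have : (fun l => if h : good (i+1) j then u j h l else 0) = u j hj := by
      funext l; rw [dif_pos hj]
    rw [this]
    exact hu₂ j hj

noncomputable def ht : ∀ i, htP F good α β i
  | 0 => (htBase F good α β hαh hβh haug).1
  | (i+1) => (htStep F good hgood α β hαh hβh hαc hβc i (ht i)).1

lemma ht_zero : ∀ k, good 0 k →
    F.d 0 *ᵥ (fun l => (ht F good hgood α β hαh hβh hαc hβc haug 0).1 l k)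
      = (fun l => (α 0 - β 0) l k) :=
  (htBase F good α β hαh hβh haug).2

lemma ht_succ (i : ℕ) : ∀ j, good (i+1) j →
    F.d (i+1) *ᵥ (fun l => (ht F good hgood α β hαh hβh hαc hβc haug (i+1)).1 l j)
      = (fun l => (α (i+1) - β (i+1)) l j)
        - (ht F good hgood α β hαh hβh hαc hβc haug i).1 *ᵥ (fun k => F.d i k j) :=
  (htStep F good hgood α β hαh hβh hαc hβc i
    (ht F good hgood α β hαh hβh hαc hβc haug i)).2

-- constant coefficient helpers
lemma c0_mul (p q : MvPolynomial V K) : coeff 0 (p * q) = coeff 0 p * coeff 0 q := by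
  have h := map_mul (constantCoeff (σ := V) (R := K)) p q
  simpa [constantCoeff_eq] using h

lemma c0_mulVec_left {m n : ℕ} {M : Matrix (Fin m) (Fin n) (MvPolynomial V K)}
    (hM : ∀ l k, coeff 0 (M l k) = 0) (v : Fin n → MvPolynomial V K) (l : Fin m) :
    coeff 0 ((M *ᵥ v) l) = 0 := by
  rw [mulVec_apply', coeff_sum]
  refine Finset.sum_eq_zero fun k _ => ?_
  rw [c0_mul, hM l k, zero_mul]

lemma c0_mulVec_right {m n : ℕ} (M : Matrix (Fin m) (Fin n) (MvPolynomial V K))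
    {v : Fin n → MvPolynomial V K} (hv : ∀ k, coeff 0 (v k) = 0) (l : Fin m) :
    coeff 0 ((M *ᵥ v) l) = 0 := by
  rw [mulVec_apply', coeff_sum]
  refine Finset.sum_eq_zero fun k _ => ?_
  rw [c0_mul, hv k, mul_zero]

include hgood hαh hβh hαc hβc haug in
/-- The key consequence of minimality: two chain maps lifting the same map have the
same constant coefficients on good columns. -/
theorem homotopy_c0 : ∀ i k, good i k → ∀ l,
    coeff 0 (α i l k) = coeff 0 (β i l k) := by
  intro i k hk l
  have key : coeff 0 ((α i - β i) l k) = 0 := by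
    cases i with
    | zero =>
      have h := congrFun (ht_zero F good hgood α β hαh hβh hαc hβc haug k hk) l
      rw [← h]
      exact c0_mulVec_left (fun l' k' => F.minimal 0 l' k') _ l
    | succ i =>
      have h := congrFun (ht_succ F good hgood α β hαh hβh hαc hβc haug i k hk) l
      have : (α (i+1) - β (i+1)) l k
          = (F.d (i+1) *ᵥ (fun l' => (ht F good hgood α β hαh hβh hαc hβc haug (i+1)).1 l' k)) l
            + ((ht F good hgood α β hαh hβh hαc hβc haug i).1 *ᵥ (fun k' => F.d i k' k)) l := by
        rw [h]; simp [Pi.sub_apply]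
      rw [this, coeff_add]
      rw [c0_mulVec_left (fun l' k' => F.minimal (i+1) l' k'),
        c0_mulVec_right _ (fun k' => F.minimal i k' k), add_zero]
  rw [Matrix.sub_apply, coeff_sub] at key
  exact sub_eq_zero.mp key


end Homotopy

section Graph
variable (E : Set (V × V)) (w : V → ℕ) (W : Set V)

lemma gen_eq_D :
    {p : MvPolynomial V K | ∃ e ∈ E, p = X e.1 * X e.2 ^ w e.2}
      = (fun s => monomial s (1 : K)) ''
          {s | ∃ e ∈ E, s = Finsupp.single e.1 1 + Finsupp.single e.2 (w e.2)} := by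
  have hmon : ∀ e : V × V, (X e.1 * X e.2 ^ w e.2 : MvPolynomial V K)
      = monomial (Finsupp.single e.1 1 + Finsupp.single e.2 (w e.2)) 1 := by
    intro e
    rw [← pow_one (X e.1 : MvPolynomial V K), X_pow_eq_monomial, X_pow_eq_monomial,
      monomial_mul, one_mul]
  ext p
  constructor
  · rintro ⟨e, he, rfl⟩; exact ⟨_, ⟨e, he, rfl⟩, (hmon e).symm⟩
  · rintro ⟨s, ⟨e, he, rfl⟩, rfl⟩; exact ⟨e, he, (hmon e).symm⟩

lemma gen_eq_H :
    {p : MvPolynomial V K | ∃ e ∈ E, e.1 ∈ W ∧ e.2 ∈ W ∧ p = X e.1 * X e.2 ^ w e.2}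
      = (fun s => monomial s (1 : K)) ''
          {s | ∃ e ∈ E, e.1 ∈ W ∧ e.2 ∈ W ∧
            s = Finsupp.single e.1 1 + Finsupp.single e.2 (w e.2)} := by
  have hmon : ∀ e : V × V, (X e.1 * X e.2 ^ w e.2 : MvPolynomial V K)
      = monomial (Finsupp.single e.1 1 + Finsupp.single e.2 (w e.2)) 1 := by
    intro e
    rw [← pow_one (X e.1 : MvPolynomial V K), X_pow_eq_monomial, X_pow_eq_monomial,
      monomial_mul, one_mul]
  ext p
  constructor
  · rintro ⟨e, he, h1, h2, rfl⟩; exact ⟨_, ⟨e, he, h1, h2, rfl⟩, (hmon e).symm⟩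
  · rintro ⟨s, ⟨e, he, h1, h2, rfl⟩, rfl⟩; exact ⟨e, he, h1, h2, (hmon e).symm⟩

lemma mono_mem (hw : ∀ v, 1 ≤ w v) (a : V →₀ ℕ) (ha : ∀ v, a v ≠ 0 → v ∈ W)
    {p : MvPolynomial V K} {b : V →₀ ℕ} (hb : b ≤ a) (hs : p.support ⊆ {b})
    (hp : p ∈ Ideal.span ((fun s => monomial s (1:K)) ''
      {s | ∃ e ∈ E, s = Finsupp.single e.1 1 + Finsupp.single e.2 (w e.2)})) :
    p ∈ Ideal.span ((fun s => monomial s (1:K)) ''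
      {s | ∃ e ∈ E, e.1 ∈ W ∧ e.2 ∈ W ∧
        s = Finsupp.single e.1 1 + Finsupp.single e.2 (w e.2)}) := by
  rw [mem_ideal_span_monomial_image] at hp ⊢
  intro m hm
  obtain ⟨s, hsD, hsle⟩ := hp m hm
  obtain ⟨e, he, rfl⟩ := hsD
  have hmb : m = b := by simpa using hs hm
  have hma : m ≤ a := hmb ▸ hb
  have hsa := le_trans hsle hma
  have h1 : 1 ≤ a e.1 := by
    have h := Finsupp.le_def.mp hsa e.1
    rw [Finsupp.add_apply, Finsupp.single_eq_same] at h
    omega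
  have h2 : 1 ≤ a e.2 := by
    have h := Finsupp.le_def.mp hsa e.2
    rw [Finsupp.add_apply, Finsupp.single_eq_same] at h
    have := hw e.2
    omega
  exact ⟨_, ⟨e, he, ha _ (by omega), ha _ (by omega), rfl⟩, hsle⟩

end Graph

lemma card_eq_of_inverse {m n : Type} [Fintype m] [Fintype n] [DecidableEq m] [DecidableEq n]
    (P : Matrix m n K) (Q : Matrix n m K) (hPQ : P * Q = 1) (hQP : Q * P = 1) :
    Fintype.card m = Fintype.card n := by
  let e : (n → K) ≃ₗ[K] (m → K) :=
    LinearEquiv.ofLinear (Matrix.toLin' P) (Matrix.toLin' Q)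
      (by rw [← Matrix.toLin'_mul, hPQ, Matrix.toLin'_one])
      (by rw [← Matrix.toLin'_mul, hQP, Matrix.toLin'_one])
  have h := e.finrank_eq
  simpa [Module.finrank_pi] using h.symm

lemma sum_ext {n : ℕ} (p : Fin n → Prop) [DecidablePred p] (f : Fin n → K)
    (hf : ∀ m, f m ≠ 0 → p m) : (∑ m : {m : Fin n // p m}, f m.1) = ∑ m, f m := by
  rw [← Finset.sum_filter_of_ne (fun x _ hx => hf x hx)]
  exact (Finset.sum_subtype _ (fun x => by simp) f).symm

end S19Aux

/-- Let `D` be a weighted oriented graph with vertex set `V`, directed edge set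
`E ⊆ V × V` and weights `w : V → ℕ+`, and let `H = D_W` be the induced subgraph on
`W ⊆ V`.  For their edge ideals `I(H), I(D) ⊆ K[x_v : v ∈ V]` and any multidegree
`a` with `supp a ⊆ W`, one has `β_{i,a}(I(H)) = β_{i,a}(I(D))` for all `i ≥ 0`. -/
theorem stmt19 {K : Type} [Field K] {V : Type}
    (E : Set (V × V)) (hirrefl : ∀ e ∈ E, e.1 ≠ e.2)
    (w : V → ℕ) (hw : ∀ v, 1 ≤ w v) (W : Set V)
    (ID IH : Ideal (MvPolynomial V K))
    (hID : ID = Ideal.span {p | ∃ e ∈ E, p = X e.1 * X e.2 ^ w e.2})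
    (hIH : IH = Ideal.span {p | ∃ e ∈ E, e.1 ∈ W ∧ e.2 ∈ W ∧ p = X e.1 * X e.2 ^ w e.2})
    (a : V →₀ ℕ) (ha : ∀ v, a v ≠ 0 → v ∈ W)
    (FH : MinFreeRes IH) (FD : MinFreeRes ID) :
    ∀ i, FH.cnt i a = FD.cnt i a := by
  classical
  intro i
  -- the ideals as spans of monomials
  have hIH' : IH = Ideal.span ((fun s => monomial s (1:K)) ''
      {s | ∃ e ∈ E, e.1 ∈ W ∧ e.2 ∈ W ∧
        s = Finsupp.single e.1 1 + Finsupp.single e.2 (w e.2)}) := by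
    rw [hIH, S19Aux.gen_eq_H]
  have hsub : IH ≤ ID := by
    rw [hID, hIH]
    apply Ideal.span_mono
    rintro p ⟨e, he, _, _, hp⟩
    exact ⟨e, he, hp⟩
  -- the "good columns" predicates and their downward closure
  have hgoodT : ∀ i' (k : Fin (FH.rk i')) (j : Fin (FH.rk (i'+1))),
      FH.d i' k j ≠ 0 → True → True := fun _ _ _ _ _ => trivial
  have hgoodH : ∀ i' (k : Fin (FH.rk i')) (j : Fin (FH.rk (i'+1))),
      FH.d i' k j ≠ 0 → FH.deg (i'+1) j ≤ a → FH.deg i' k ≤ a := by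
    intro i' k j hne hj
    obtain ⟨m₀, hm₀⟩ := Finset.nonempty_iff_ne_empty.mpr
      (fun hemp => hne (MvPolynomial.support_eq_empty.mp hemp))
    exact le_trans (le_iff_exists_add.mpr ⟨m₀, (FH.d_homog i' k j m₀ hm₀).symm⟩) hj
  have hgoodD : ∀ i' (k : Fin (FD.rk i')) (j : Fin (FD.rk (i'+1))),
      FD.d i' k j ≠ 0 → FD.deg (i'+1) j ≤ a → FD.deg i' k ≤ a := by
    intro i' k j hne hj
    obtain ⟨m₀, hm₀⟩ := Finset.nonempty_iff_ne_empty.mpr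
      (fun hemp => hne (MvPolynomial.support_eq_empty.mp hemp))
    exact le_trans (le_iff_exists_add.mpr ⟨m₀, (FD.d_homog i' k j m₀ hm₀).symm⟩) hj
  -- solvability of the two lifting problems at stage 0
  have hsolvφ' : ∀ k : Fin (FH.rk 0), True →
      FH.aug (Pi.single k 1) ∈ LinearMap.range FD.aug := by
    intro k _
    rw [FD.range_aug]
    exact hsub ((FH.range_aug _).mp ⟨Pi.single k 1, rfl⟩)
  have hsolvψ' : ∀ k : Fin (FD.rk 0), FD.deg 0 k ≤ a →
      FD.aug (Pi.single k 1) ∈ LinearMap.range FH.aug := by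
    intro k hk
    refine (FH.range_aug _).mpr ?_
    have hmem : FD.aug (Pi.single k 1) ∈ ID := (FD.range_aug _).mp ⟨Pi.single k 1, rfl⟩
    have hmem2 : FD.aug (Pi.single k 1) ∈ Ideal.span ((fun s => monomial s (1:K)) ''
        {s | ∃ e ∈ E, s = Finsupp.single e.1 1 + Finsupp.single e.2 (w e.2)}) := by
      rw [← S19Aux.gen_eq_D, ← hID]; exact hmem
    rw [hIH']
    exact S19Aux.mono_mem E w W hw a ha hk (fun m hm => FD.aug_homog k hm) hmem2
  -- the chain map φ : F(H) → F(D) lifting the inclusion IH ⊆ ID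
  obtain ⟨φ, hφh, hφaug, hφc, hφcv, hφav⟩ :
      ∃ φ : ∀ i', Matrix (Fin (FD.rk i')) (Fin (FH.rk i')) (MvPolynomial V K),
        (∀ i' l k, S19Aux.Homog (FD.deg i' l) (FH.deg i' k) (φ i' l k)) ∧
        (∀ k, FD.aug (fun l => φ 0 l k) = FH.aug (Pi.single k 1)) ∧
        (∀ i' j, FD.d i' *ᵥ (fun l => φ (i'+1) l j) = φ i' *ᵥ (fun k => FH.d i' k j)) ∧
        (∀ i' (y : Fin (FH.rk (i'+1)) → MvPolynomial V K),
          FD.d i' *ᵥ (φ (i'+1) *ᵥ y) = φ i' *ᵥ (FH.d i' *ᵥ y)) ∧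
        (∀ y : Fin (FH.rk 0) → MvPolynomial V K, FD.aug (φ 0 *ᵥ y) = FH.aug y) := by
    refine ⟨fun i' => (S19Aux.cm FH FD (fun _ _ => True) (fun _ _ _ _ h => h) hsolvφ' i').1,
      fun i' => (S19Aux.cm FH FD _ _ hsolvφ' i').2.1,
      fun k => S19Aux.cm_aug FH FD _ _ hsolvφ' k trivial,
      fun i' j => S19Aux.cm_chain FH FD _ _ hsolvφ' i' j trivial,
      fun i' y => S19Aux.cm_chain_vec FH FD _ _ hsolvφ' i' y (fun _ _ => trivial),
      fun y => S19Aux.cm_aug_vec FH FD _ _ hsolvφ' y (fun _ _ => trivial)⟩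
  -- the chain map ψ : F(D) → F(H), defined on columns of multidegree ≤ a
  obtain ⟨ψ, hψh, hψaug, hψc, hψcv, hψav⟩ :
      ∃ ψ : ∀ i', Matrix (Fin (FH.rk i')) (Fin (FD.rk i')) (MvPolynomial V K),
        (∀ i' l k, S19Aux.Homog (FH.deg i' l) (FD.deg i' k) (ψ i' l k)) ∧
        (∀ k, FD.deg 0 k ≤ a → FH.aug (fun l => ψ 0 l k) = FD.aug (Pi.single k 1)) ∧
        (∀ i' j, FD.deg (i'+1) j ≤ a →
          FH.d i' *ᵥ (fun l => ψ (i'+1) l j) = ψ i' *ᵥ (fun k => FD.d i' k j)) ∧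
        (∀ i' (y : Fin (FD.rk (i'+1)) → MvPolynomial V K),
          (∀ j, y j ≠ 0 → FD.deg (i'+1) j ≤ a) →
          FH.d i' *ᵥ (ψ (i'+1) *ᵥ y) = ψ i' *ᵥ (FD.d i' *ᵥ y)) ∧
        (∀ y : Fin (FD.rk 0) → MvPolynomial V K,
          (∀ k, y k ≠ 0 → FD.deg 0 k ≤ a) → FH.aug (ψ 0 *ᵥ y) = FD.aug y) := by
    refine ⟨fun i' => (S19Aux.cm FD FH (fun i' j => FD.deg i' j ≤ a) hgoodD hsolvψ' i').1,
      fun i' => (S19Aux.cm FD FH _ hgoodD hsolvψ' i').2.1,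
      fun k hk => S19Aux.cm_aug FD FH _ hgoodD hsolvψ' k hk,
      fun i' j hj => S19Aux.cm_chain FD FH _ hgoodD hsolvψ' i' j hj,
      fun i' y hy => S19Aux.cm_chain_vec FD FH _ hgoodD hsolvψ' i' y hy,
      fun y hy => S19Aux.cm_aug_vec FD FH _ hgoodD hsolvψ' y hy⟩
  -- homogeneity of the identity matrices
  have hIdh : ∀ {n : ℕ} (degs : Fin n → V →₀ ℕ) (l k : Fin n),
      S19Aux.Homog (degs l) (degs k)
        ((1 : Matrix (Fin n) (Fin n) (MvPolynomial V K)) l k) := by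
    intro n degs l k
    by_cases h : l = k
    · subst h
      rw [Matrix.one_apply_eq]
      intro m hm
      have h1 : (1 : MvPolynomial V K) = monomial 0 1 := by
        rw [monomial_zero', MvPolynomial.C_1]
      rw [h1] at hm
      have hm0 := MvPolynomial.support_monomial_subset hm
      simp only [Finset.mem_singleton] at hm0
      rw [hm0, add_zero]
    · rw [Matrix.one_apply_ne h]; exact S19Aux.homog_zero
  -- the identity matrices form a chain map
  have hIdcH : ∀ (i' : ℕ) (j : Fin (FH.rk (i'+1))),
      FH.d i' *ᵥ (fun l => (1 : Matrix (Fin (FH.rk (i'+1))) (Fin (FH.rk (i'+1)))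
          (MvPolynomial V K)) l j)
        = (1 : Matrix (Fin (FH.rk i')) (Fin (FH.rk i')) (MvPolynomial V K)) *ᵥ
            (fun k => FH.d i' k j) := by
    intro i' j
    have hcol : (fun l => (1 : Matrix (Fin (FH.rk (i'+1))) (Fin (FH.rk (i'+1)))
        (MvPolynomial V K)) l j) = Pi.single j 1 := by
      funext l
      simp [Matrix.one_apply, Pi.single_apply]
    rw [hcol, Matrix.mulVec_single, Matrix.one_mulVec]
    funext k; simp
  have hIdcD : ∀ (i' : ℕ) (j : Fin (FD.rk (i'+1))),
      FD.d i' *ᵥ (fun l => (1 : Matrix (Fin (FD.rk (i'+1))) (Fin (FD.rk (i'+1)))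
          (MvPolynomial V K)) l j)
        = (1 : Matrix (Fin (FD.rk i')) (Fin (FD.rk i')) (MvPolynomial V K)) *ᵥ
            (fun k => FD.d i' k j) := by
    intro i' j
    have hcol : (fun l => (1 : Matrix (Fin (FD.rk (i'+1))) (Fin (FD.rk (i'+1)))
        (MvPolynomial V K)) l j) = Pi.single j 1 := by
      funext l
      simp [Matrix.one_apply, Pi.single_apply]
    rw [hcol, Matrix.mulVec_single, Matrix.one_mulVec]
    funext k; simp
  -- homogeneity of the compositions
  have hαHh : ∀ i' (l k : Fin (FH.rk i')),
      S19Aux.Homog (FH.deg i' l) (FH.deg i' k) ((ψ i' * φ i') l k) := by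
    intro i' l k
    rw [Matrix.mul_apply]
    exact S19Aux.homog_sum fun m _ => ((hψh i' l m).mul (hφh i' m k))
  have hαDh : ∀ i' (l k : Fin (FD.rk i')),
      S19Aux.Homog (FD.deg i' l) (FD.deg i' k) ((φ i' * ψ i') l k) := by
    intro i' l k
    rw [Matrix.mul_apply]
    exact S19Aux.homog_sum fun m _ => ((hφh i' l m).mul (hψh i' m k))
  -- ψφ is a chain map on columns of degree ≤ a
  have hcolmul : ∀ {m n p : ℕ} (A : Matrix (Fin m) (Fin n) (MvPolynomial V K))
      (B : Matrix (Fin n) (Fin p) (MvPolynomial V K)) (j : Fin p),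
      (fun l => (A * B) l j) = A *ᵥ (fun t => B t j) := by
    intro m n p A B j
    funext l
    rw [Matrix.mul_apply, S19Aux.mulVec_apply']
  have hαHc : ∀ i' (j : Fin (FH.rk (i'+1))), FH.deg (i'+1) j ≤ a →
      FH.d i' *ᵥ (fun l => (ψ (i'+1) * φ (i'+1)) l j)
        = (ψ i' * φ i') *ᵥ (fun k => FH.d i' k j) := by
    intro i' j hj
    rw [hcolmul]
    have hsupp : ∀ m, φ (i'+1) m j ≠ 0 → FD.deg (i'+1) m ≤ a :=
      S19Aux.homog_col_supp (fun t => hφh (i'+1) t j) a hj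
    rw [hψcv i' (fun t => φ (i'+1) t j) hsupp]
    rw [hφc i' j, Matrix.mulVec_mulVec]
  have hαDc : ∀ i' (j : Fin (FD.rk (i'+1))), FD.deg (i'+1) j ≤ a →
      FD.d i' *ᵥ (fun l => (φ (i'+1) * ψ (i'+1)) l j)
        = (φ i' * ψ i') *ᵥ (fun k => FD.d i' k j) := by
    intro i' j hj
    rw [hcolmul]
    rw [hφcv i' _]
    rw [hψc i' j hj, Matrix.mulVec_mulVec]
  -- ψφ agrees with the identity after augmentation, on columns of degree ≤ a
  have hIdcolH : ∀ (k : Fin (FH.rk 0)),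
      (fun l => (1 : Matrix (Fin (FH.rk 0)) (Fin (FH.rk 0)) (MvPolynomial V K)) l k)
        = Pi.single k 1 := by
    intro k; funext l; simp [Matrix.one_apply, Pi.single_apply]
  have hIdcolD : ∀ (k : Fin (FD.rk 0)),
      (fun l => (1 : Matrix (Fin (FD.rk 0)) (Fin (FD.rk 0)) (MvPolynomial V K)) l k)
        = Pi.single k 1 := by
    intro k; funext l; simp [Matrix.one_apply, Pi.single_apply]
  have hαHaug : ∀ k : Fin (FH.rk 0), FH.deg 0 k ≤ a →
      FH.aug (fun l => (ψ 0 * φ 0) l k)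
        = FH.aug (fun l => (1 : Matrix (Fin (FH.rk 0)) (Fin (FH.rk 0))
            (MvPolynomial V K)) l k) := by
    intro k hk
    rw [hcolmul, hIdcolH]
    have hsupp : ∀ m, φ 0 m k ≠ 0 → FD.deg 0 m ≤ a :=
      S19Aux.homog_col_supp (fun t => hφh 0 t k) a hk
    rw [hψav (fun t => φ 0 t k) hsupp]
    exact hφaug k
  have hαDaug : ∀ k : Fin (FD.rk 0), FD.deg 0 k ≤ a →
      FD.aug (fun l => (φ 0 * ψ 0) l k)
        = FD.aug (fun l => (1 : Matrix (Fin (FD.rk 0)) (Fin (FD.rk 0))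
            (MvPolynomial V K)) l k) := by
    intro k hk
    rw [hcolmul, hIdcolD]
    rw [hφav]
    exact hψaug k hk
  -- the two homotopy comparisons
  have keyH : ∀ i' (k : Fin (FH.rk i')), FH.deg i' k ≤ a → ∀ l,
      coeff 0 ((ψ i' * φ i') l k)
        = coeff 0 ((1 : Matrix (Fin (FH.rk i')) (Fin (FH.rk i')) (MvPolynomial V K)) l k) :=
    S19Aux.homotopy_c0 FH (fun i' j => FH.deg i' j ≤ a) hgoodH
      (fun i' => ψ i' * φ i') (fun i' => 1) hαHh (fun i' => hIdh (FH.deg i'))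
      hαHc (fun i' j hj => hIdcH i' j) hαHaug
  have keyD : ∀ i' (k : Fin (FD.rk i')), FD.deg i' k ≤ a → ∀ l,
      coeff 0 ((φ i' * ψ i') l k)
        = coeff 0 ((1 : Matrix (Fin (FD.rk i')) (Fin (FD.rk i')) (MvPolynomial V K)) l k) :=
    S19Aux.homotopy_c0 FD (fun i' j => FD.deg i' j ≤ a) hgoodD
      (fun i' => φ i' * ψ i') (fun i' => 1) hαDh (fun i' => hIdh (FD.deg i'))
      hαDc (fun i' j hj => hIdcD i' j) hαDaug
  -- constant-coefficient matrices over K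
  have hA : FH.cnt i a = Fintype.card {j : Fin (FH.rk i) // FH.deg i j = a} :=
    Nat.card_eq_fintype_card
  have hB : FD.cnt i a = Fintype.card {j : Fin (FD.rk i) // FD.deg i j = a} :=
    Nat.card_eq_fintype_card
  rw [hA, hB]
  have hc0mulH : ∀ (l k : Fin (FH.rk i)), coeff 0 ((ψ i * φ i) l k)
      = ∑ m, coeff 0 (ψ i l m) * coeff 0 (φ i m k) := by
    intro l k
    rw [Matrix.mul_apply, MvPolynomial.coeff_sum]
    exact Finset.sum_congr rfl fun m _ => S19Aux.c0_mul _ _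
  have hc0mulD : ∀ (l k : Fin (FD.rk i)), coeff 0 ((φ i * ψ i) l k)
      = ∑ m, coeff 0 (φ i l m) * coeff 0 (ψ i m k) := by
    intro l k
    rw [Matrix.mul_apply, MvPolynomial.coeff_sum]
    exact Finset.sum_congr rfl fun m _ => S19Aux.c0_mul _ _
  refine S19Aux.card_eq_of_inverse
    (P := fun (j : {j : Fin (FH.rk i) // FH.deg i j = a})
      (b : {j : Fin (FD.rk i) // FD.deg i j = a}) => coeff 0 (ψ i j.1 b.1))
    (Q := fun b j => coeff 0 (φ i b.1 j.1)) ?_ ?_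
  · -- P * Q = 1 on the H-side
    ext k j
    change (∑ b : {j : Fin (FD.rk i) // FD.deg i j = a}, coeff 0 (ψ i k.1 b.1) * coeff 0 (φ i b.1 j.1)) = _
    have hsum : (∑ b : {j : Fin (FD.rk i) // FD.deg i j = a},
        coeff 0 (ψ i k.1 b.1) * coeff 0 (φ i b.1 j.1))
        = ∑ m, coeff 0 (ψ i k.1 m) * coeff 0 (φ i m j.1) := by
      refine S19Aux.sum_ext (fun m => FD.deg i m = a)
        (fun m => coeff 0 (ψ i k.1 m) * coeff 0 (φ i m j.1)) ?_
      intro m hfm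
      have hφ0 : coeff 0 (φ i m j.1) ≠ 0 := by
        intro h0
        apply hfm
        show coeff 0 (ψ i k.1 m) * coeff 0 (φ i m j.1) = 0
        rw [h0, mul_zero]
      have := hφh i m j.1 0 (MvPolynomial.mem_support_iff.mpr hφ0)
      rwa [add_zero, j.2] at this
    rw [hsum, ← hc0mulH]
    have hk : FH.deg i j.1 ≤ a := le_of_eq j.2
    have := keyH i j.1 hk k.1
    rw [this]
    by_cases h : k = j
    · subst h
      rw [Matrix.one_apply_eq, Matrix.one_apply_eq]
      exact MvPolynomial.coeff_zero_one
    · rw [Matrix.one_apply_ne h, Matrix.one_apply_ne (fun hc => h (Subtype.ext hc))]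
      exact MvPolynomial.coeff_zero _
  · -- Q * P = 1 on the D-side
    ext b b'
    change (∑ j : {j : Fin (FH.rk i) // FH.deg i j = a}, coeff 0 (φ i b.1 j.1) * coeff 0 (ψ i j.1 b'.1)) = _
    have hsum : (∑ j : {j : Fin (FH.rk i) // FH.deg i j = a},
        coeff 0 (φ i b.1 j.1) * coeff 0 (ψ i j.1 b'.1))
        = ∑ m, coeff 0 (φ i b.1 m) * coeff 0 (ψ i m b'.1) := by
      refine S19Aux.sum_ext (fun m => FH.deg i m = a)
        (fun m => coeff 0 (φ i b.1 m) * coeff 0 (ψ i m b'.1)) ?_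
      intro m hfm
      have hψ0 : coeff 0 (ψ i m b'.1) ≠ 0 := by
        intro h0
        apply hfm
        show coeff 0 (φ i b.1 m) * coeff 0 (ψ i m b'.1) = 0
        rw [h0, mul_zero]
      have := hψh i m b'.1 0 (MvPolynomial.mem_support_iff.mpr hψ0)
      rwa [add_zero, b'.2] at this
    rw [hsum, ← hc0mulD]
    have hk : FD.deg i b'.1 ≤ a := le_of_eq b'.2
    have := keyD i b'.1 hk b.1
    rw [this]
    by_cases h : b = b'
    · subst h
      rw [Matrix.one_apply_eq, Matrix.one_apply_eq]
      exact MvPolynomial.coeff_zero_one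
    · rw [Matrix.one_apply_ne h, Matrix.one_apply_ne (fun hc => h (Subtype.ext hc))]
      exact MvPolynomial.coeff_zero _
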